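/- arXiv:2207.06806 — 4 statements merged into one kernel-verified Lean document; each statement's English description precedes it below -/
import Mathlib

section
/- For g_i = [[R_i, r_i],[0, 1]] and g_j = [[R_j, r_j],[0, 1]] in SE(2), one has g_i⁻¹ g_j = [[R_iᵀR_j, -R_iᵀ(r_i - r_j)],[0, 1]] and ‖Ad_{g_i⁻¹ g_j}(1, 0)‖² = 2 + |r_j - r_i|²; consequently |r_i - r_j| = sqrt(‖Ad_{g_i⁻¹ g_j}(1, 0)‖² - 2). -/
open Matrix

noncomputable section

/-- The SE(2) matrix `[[R, r],[0, 1]]`. -/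
def SE2 (R : Matrix (Fin 2) (Fin 2) ℝ) (r : Fin 2 → ℝ) : Matrix (Fin 3) (Fin 3) ℝ :=
  !![R 0 0, R 0 1, r 0; R 1 0, R 1 1, r 1; 0, 0, 1]

/-- The se(2) matrix `[[-aJ, b],[0, 0]]` with `J = [[0,1],[-1,0]]`, denoted `(a, b)`. -/
def se2 (a : ℝ) (b : Fin 2 → ℝ) : Matrix (Fin 3) (Fin 3) ℝ :=
  !![0, -a, b 0; a, 0, b 1; 0, 0, 0]

/-- The squared norm `‖ξ‖² = tr(ξᵀξ)` on se(2). -/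
def normSq (ξ : Matrix (Fin 3) (Fin 3) ℝ) : ℝ := (ξᵀ * ξ).trace

lemma SE2_mul (R S : Matrix (Fin 2) (Fin 2) ℝ) (r s : Fin 2 → ℝ) :
    SE2 R r * SE2 S s = SE2 (R * S) (R *ᵥ s + r) := by
  ext i j
  fin_cases i <;> fin_cases j <;>
    simp [SE2, Matrix.mul_apply, Fin.sum_univ_three, Matrix.mulVec, dotProduct,
      Fin.sum_univ_two]

lemma SE2_one : SE2 1 0 = 1 := by
  ext i j
  fin_cases i <;> fin_cases j <;>
    simp [SE2, Matrix.one_apply, Matrix.vecHead, Matrix.vecTail]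

lemma SE2_inv (R : Matrix (Fin 2) (Fin 2) ℝ) (r : Fin 2 → ℝ) (h : R * Rᵀ = 1) :
    (SE2 R r)⁻¹ = SE2 Rᵀ (-(Rᵀ *ᵥ r)) := by
  apply Matrix.inv_eq_right_inv
  rw [SE2_mul, h]
  have hv : R *ᵥ -(Rᵀ *ᵥ r) + r = 0 := by
    rw [Matrix.mulVec_neg, Matrix.mulVec_mulVec, h, Matrix.one_mulVec]
    simp
  rw [hv, SE2_one]

lemma Ad_eq (Q : Matrix (Fin 2) (Fin 2) ℝ) (b : Fin 2 → ℝ) (hdet : Q.det = 1) :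
    SE2 Q b * se2 1 0 * SE2 Qᵀ (-(Qᵀ *ᵥ b)) = se2 1 ![b 1, -(b 0)] := by
  rw [Matrix.det_fin_two] at hdet
  ext i j
  fin_cases i <;> fin_cases j <;>
    simp [SE2, se2, Matrix.mul_apply, Fin.sum_univ_three, Matrix.mulVec, dotProduct,
      Fin.sum_univ_two, Matrix.vecHead, Matrix.vecTail] <;>
    first
      | ring1
      | linear_combination hdet
      | linear_combination -hdet
      | linear_combination b 0 * hdet
      | linear_combination -(b 0) * hdet
      | linear_combination b 1 * hdet
      | linear_combination -(b 1) * hdet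

lemma normSq_se2 (a : ℝ) (b : Fin 2 → ℝ) :
    normSq (se2 a b) = 2 * a ^ 2 + b 0 ^ 2 + b 1 ^ 2 := by
  simp [normSq, se2, Matrix.trace, Matrix.mul_apply, Fin.sum_univ_three, Matrix.diag,
    Matrix.vecHead, Matrix.vecTail, Matrix.transpose_apply]
  ring

/-- `g_i⁻¹ g_j = [[R_iᵀR_j, -R_iᵀ(r_i - r_j)],[0,1]]`,
`‖Ad_{g_i⁻¹ g_j}(1,0)‖² = 2 + |r_j - r_i|²`, and consequently
`|r_i - r_j| = sqrt(‖Ad_{g_i⁻¹ g_j}(1,0)‖² - 2)`. -/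
theorem relative_distance_via_adjoint (Ri Rj : Matrix (Fin 2) (Fin 2) ℝ)
    (ri rj : Fin 2 → ℝ) (hRi : Riᵀ * Ri = 1) (hdeti : Ri.det = 1)
    (hRj : Rjᵀ * Rj = 1) (hdetj : Rj.det = 1) :
    (SE2 Ri ri)⁻¹ * SE2 Rj rj = SE2 (Riᵀ * Rj) (-(Riᵀ *ᵥ (ri - rj))) ∧
    normSq ((SE2 Ri ri)⁻¹ * SE2 Rj rj * se2 1 0 * ((SE2 Ri ri)⁻¹ * SE2 Rj rj)⁻¹) =
      2 + ((rj 0 - ri 0) ^ 2 + (rj 1 - ri 1) ^ 2) ∧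
    Real.sqrt ((ri 0 - rj 0) ^ 2 + (ri 1 - rj 1) ^ 2) =
      Real.sqrt
        (normSq ((SE2 Ri ri)⁻¹ * SE2 Rj rj * se2 1 0 * ((SE2 Ri ri)⁻¹ * SE2 Rj rj)⁻¹) - 2) := by
  have hRi' : Ri * Riᵀ = 1 := mul_eq_one_comm.mp hRi
  have hRj' : Rj * Rjᵀ = 1 := mul_eq_one_comm.mp hRj
  set Q : Matrix (Fin 2) (Fin 2) ℝ := Riᵀ * Rj with hQdef
  set b : Fin 2 → ℝ := -(Riᵀ *ᵥ (ri - rj)) with hbdef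
  have hQ' : Q * Qᵀ = 1 := by
    rw [hQdef, Matrix.transpose_mul, Matrix.transpose_transpose]
    calc Riᵀ * Rj * (Rjᵀ * Ri) = Riᵀ * (Rj * Rjᵀ) * Ri := by
          rw [Matrix.mul_assoc, Matrix.mul_assoc, Matrix.mul_assoc]
      _ = 1 := by rw [hRj', Matrix.mul_one, hRi]
  have hQdet : Q.det = 1 := by
    rw [hQdef, Matrix.det_mul, Matrix.det_transpose, hdeti, hdetj, mul_one]
  have h1 : (SE2 Ri ri)⁻¹ * SE2 Rj rj = SE2 Q b := by
    rw [SE2_inv Ri ri hRi', SE2_mul, hQdef, hbdef]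
    congr 1
    rw [Matrix.mulVec_sub]
    abel
  have hAd : normSq ((SE2 Ri ri)⁻¹ * SE2 Rj rj * se2 1 0 * ((SE2 Ri ri)⁻¹ * SE2 Rj rj)⁻¹) =
      2 + (b 0 ^ 2 + b 1 ^ 2) := by
    rw [h1, SE2_inv Q b hQ', Ad_eq Q b hQdet, normSq_se2]
    simp
    ring
  have hb : b 0 ^ 2 + b 1 ^ 2 = (rj 0 - ri 0) ^ 2 + (rj 1 - ri 1) ^ 2 := by
    have hA00 : Ri 0 0 * Ri 0 0 + Ri 0 1 * Ri 0 1 = 1 := by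
      have := congrFun (congrFun hRi' 0) 0
      simpa [Matrix.mul_apply, Fin.sum_univ_two, Matrix.one_apply] using this
    have hA01 : Ri 0 0 * Ri 1 0 + Ri 0 1 * Ri 1 1 = 0 := by
      have := congrFun (congrFun hRi' 0) 1
      simpa [Matrix.mul_apply, Fin.sum_univ_two, Matrix.one_apply] using this
    have hA11 : Ri 1 0 * Ri 1 0 + Ri 1 1 * Ri 1 1 = 1 := by
      have := congrFun (congrFun hRi' 1) 1
      simpa [Matrix.mul_apply, Fin.sum_univ_two, Matrix.one_apply] using this
    rw [hbdef]
    simp [Matrix.mulVec, dotProduct, Fin.sum_univ_two]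
    linear_combination (ri 0 - rj 0) ^ 2 * hA00 + (ri 1 - rj 1) ^ 2 * hA11 +
      2 * (ri 0 - rj 0) * (ri 1 - rj 1) * hA01
  have h2 : normSq ((SE2 Ri ri)⁻¹ * SE2 Rj rj * se2 1 0 * ((SE2 Ri ri)⁻¹ * SE2 Rj rj)⁻¹) =
      2 + ((rj 0 - ri 0) ^ 2 + (rj 1 - ri 1) ^ 2) := by rw [hAd, hb]
  refine ⟨h1, h2, ?_⟩
  rw [h2]
  congr 1
  ring
end
end

section
/- For every (R, r) ∈ SE(2) and every x₀ ∈ ℝ², one has ‖Ad_{(R,r)⁻¹}(1, Jx₀)‖² = 2 + |x₀ - r|²; in particular, taking x₀ = 0, ‖Ad_{(R,r)⁻¹}(1, 0)‖² = 2 + |r|², so that the distance from the translation part r to the origin equals sqrt(‖Ad_{(R,r)⁻¹}(1, 0)‖² - 2). -/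
open Matrix

noncomputable section

/-- `J = [[0, 1],[-1, 0]]`. -/
def Jmat : Matrix (Fin 2) (Fin 2) ℝ := !![0, 1; -1, 0]

set_option maxHeartbeats 2000000 in
/-- `‖Ad_{(R,r)⁻¹}(1, Jx₀)‖² = 2 + |x₀ - r|²`; in particular for `x₀ = 0`,
`‖Ad_{(R,r)⁻¹}(1, 0)‖² = 2 + |r|²`, so the distance from `r` to the origin is
`sqrt(‖Ad_{(R,r)⁻¹}(1, 0)‖² - 2)`. -/
theorem distance_to_point_via_adjoint (R : Matrix (Fin 2) (Fin 2) ℝ) (r : Fin 2 → ℝ)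
    (hR : Rᵀ * R = 1) (hdet : R.det = 1) (x₀ : Fin 2 → ℝ) :
    normSq ((SE2 R r)⁻¹ * se2 1 (Jmat *ᵥ x₀) * SE2 R r) =
      2 + ((x₀ 0 - r 0) ^ 2 + (x₀ 1 - r 1) ^ 2) ∧
    normSq ((SE2 R r)⁻¹ * se2 1 0 * SE2 R r) = 2 + (r 0 ^ 2 + r 1 ^ 2) ∧
    Real.sqrt (r 0 ^ 2 + r 1 ^ 2) =
      Real.sqrt (normSq ((SE2 R r)⁻¹ * se2 1 0 * SE2 R r) - 2) := by
  have hR' : R * Rᵀ = 1 := mul_eq_one_comm.mp hR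
  have c00 := congrFun (congrFun hR 0) 0
  have c01 := congrFun (congrFun hR 0) 1
  have c11 := congrFun (congrFun hR 1) 1
  have d00 := congrFun (congrFun hR' 0) 0
  have d01 := congrFun (congrFun hR' 0) 1
  have d11 := congrFun (congrFun hR' 1) 1
  simp [Matrix.mul_apply, Fin.sum_univ_two, Matrix.one_apply] at c00 c01 c11 d00 d01 d11
  simp [Matrix.det_fin_two] at hdet
  have hinv : (SE2 R r)⁻¹ =
      !![R 0 0, R 1 0, -(R 0 0 * r 0 + R 1 0 * r 1);
         R 0 1, R 1 1, -(R 0 1 * r 0 + R 1 1 * r 1);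
         0, 0, 1] := by
    apply Matrix.inv_eq_left_inv
    ext i j
    fin_cases i <;> fin_cases j <;>
      simp [Matrix.mul_apply, Fin.sum_univ_three, SE2, Matrix.one_apply] <;> linarith
  have conj : ∀ b : Fin 2 → ℝ,
      (SE2 R r)⁻¹ * se2 1 b * SE2 R r =
        se2 1 ![R 0 0 * (b 0 - r 1) + R 1 0 * (b 1 + r 0),
                R 0 1 * (b 0 - r 1) + R 1 1 * (b 1 + r 0)] := by
    intro b
    rw [hinv]
    ext i j
    fin_cases i <;> fin_cases j <;>
      simp [Matrix.mul_apply, Fin.sum_univ_three, SE2, se2, Matrix.vecHead, Matrix.vecTail] <;>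
      nlinarith [c00, c01, c11, hdet, d00, d01, d11]
  have nrm : ∀ c : Fin 2 → ℝ, normSq (se2 1 c) = 2 + (c 0 ^ 2 + c 1 ^ 2) := by
    intro c
    simp [normSq, Matrix.trace, Matrix.diag, Fin.sum_univ_three, Matrix.mul_apply,
      Matrix.transpose_apply, se2, Matrix.vecHead, Matrix.vecTail]
    ring
  have key : ∀ b : Fin 2 → ℝ,
      normSq ((SE2 R r)⁻¹ * se2 1 b * SE2 R r) =
        2 + ((b 0 - r 1) ^ 2 + (b 1 + r 0) ^ 2) := by
    intro b
    rw [conj b, nrm]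
    simp only [Matrix.cons_val_zero, Matrix.cons_val_one, Matrix.head_cons]
    linear_combination (b 0 - r 1) ^ 2 * d00 + 2 * (b 0 - r 1) * (b 1 + r 0) * d01 +
      (b 1 + r 0) ^ 2 * d11
  refine ⟨?_, ?_, ?_⟩
  · rw [key (Jmat *ᵥ x₀)]
    simp [Jmat, Matrix.mulVec, dotProduct, Fin.sum_univ_two]
    ring
  · rw [key 0]; simp; ring
  · rw [key 0]; simp; ring_nf
end
end

section
/- Let v = v¹e₁ + v²e₂ + v³e₃ ∈ se(2) and define the linear map D : se(2) → Matrix(3, 3, ℝ) by D(η) = (I - v/2) η (I + v/2), where I is the 3×3 identity matrix. Then D maps se(2) into se(2), and in the basis (e₁, e₂, e₃) it acts by D(e₁) = (1 + (v¹)²/4) e₁ + (v¹v²/4 - v³/2) e₂ + (v¹v³/4 + v²/2) e₃, D(e₂) = e₂ - (v¹/2) e₃, and D(e₃) = (v¹/2) e₂ + e₃; i.e., the matrix of the inverse right-trivialized tangent of the Cayley map on se(2) is [[1 + (v¹)²/4, 0, 0],[v¹v²/4 - v³/2, 1, v¹/2],[v¹v³/4 + v²/2, -v¹/2, 1]]. 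-/
open Matrix

set_option maxHeartbeats 1600000

noncomputable section

/-- The basis element `e₁ = [[0,-1,0],[1,0,0],[0,0,0]]` of se(2). -/
def e1 : Matrix (Fin 3) (Fin 3) ℝ := !![0, -1, 0; 1, 0, 0; 0, 0, 0]

/-- The basis element `e₂ = [[0,0,1],[0,0,0],[0,0,0]]` of se(2). -/
def e2 : Matrix (Fin 3) (Fin 3) ℝ := !![0, 0, 1; 0, 0, 0; 0, 0, 0]

/-- The basis element `e₃ = [[0,0,0],[0,0,1],[0,0,0]]` of se(2). -/
def e3 : Matrix (Fin 3) (Fin 3) ℝ := !![0, 0, 0; 0, 0, 1; 0, 0, 0]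

/-- The inverse right-trivialized tangent of the Cayley map,
`dcay_v⁻¹(η) = (I - v/2) η (I + v/2)`. -/
def dcayInv (v η : Matrix (Fin 3) (Fin 3) ℝ) : Matrix (Fin 3) (Fin 3) ℝ :=
  (1 - (1 / 2 : ℝ) • v) * η * (1 + (1 / 2 : ℝ) • v)

/-- For `v = v¹e₁ + v²e₂ + v³e₃ ∈ se(2)`, the map `D(η) = (I - v/2)η(I + v/2)` maps se(2)
into se(2) and, in the basis `(e₁, e₂, e₃)`, acts by the matrix
`[[1 + (v¹)²/4, 0, 0],[v¹v²/4 - v³/2, 1, v¹/2],[v¹v³/4 + v²/2, -v¹/2, 1]]`. -/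
theorem dcayInv_se2 (v1 v2 v3 : ℝ) :
    (∀ η ∈ Submodule.span ℝ ({e1, e2, e3} : Set (Matrix (Fin 3) (Fin 3) ℝ)),
      dcayInv (v1 • e1 + v2 • e2 + v3 • e3) η ∈
        Submodule.span ℝ ({e1, e2, e3} : Set (Matrix (Fin 3) (Fin 3) ℝ))) ∧
    dcayInv (v1 • e1 + v2 • e2 + v3 • e3) e1 =
      (1 + v1 ^ 2 / 4) • e1 + (v1 * v2 / 4 - v3 / 2) • e2 + (v1 * v3 / 4 + v2 / 2) • e3 ∧
    dcayInv (v1 • e1 + v2 • e2 + v3 • e3) e2 = e2 - (v1 / 2) • e3 ∧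
    dcayInv (v1 • e1 + v2 • e2 + v3 • e3) e3 = (v1 / 2) • e2 + e3 := by
  have h1 : dcayInv (v1 • e1 + v2 • e2 + v3 • e3) e1 =
      (1 + v1 ^ 2 / 4) • e1 + (v1 * v2 / 4 - v3 / 2) • e2 + (v1 * v3 / 4 + v2 / 2) • e3 := by
    ext i j
    fin_cases i <;> fin_cases j <;>
      simp [dcayInv, e1, e2, e3, Matrix.mul_apply, Fin.sum_univ_three, Matrix.one_apply,
        Matrix.vecHead, Matrix.vecTail] <;> ring
  have h2 : dcayInv (v1 • e1 + v2 • e2 + v3 • e3) e2 = e2 - (v1 / 2) • e3 := by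
    ext i j
    fin_cases i <;> fin_cases j <;>
      simp [dcayInv, e1, e2, e3, Matrix.mul_apply, Fin.sum_univ_three, Matrix.one_apply,
        Matrix.vecHead, Matrix.vecTail] <;> ring
  have h3 : dcayInv (v1 • e1 + v2 • e2 + v3 • e3) e3 = (v1 / 2) • e2 + e3 := by
    ext i j
    fin_cases i <;> fin_cases j <;>
      simp [dcayInv, e1, e2, e3, Matrix.mul_apply, Fin.sum_univ_three, Matrix.one_apply,
        Matrix.vecHead, Matrix.vecTail] <;> ring
  have m1 : e1 ∈ Submodule.span ℝ ({e1, e2, e3} : Set (Matrix (Fin 3) (Fin 3) ℝ)) :=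
    Submodule.subset_span (by simp)
  have m2 : e2 ∈ Submodule.span ℝ ({e1, e2, e3} : Set (Matrix (Fin 3) (Fin 3) ℝ)) :=
    Submodule.subset_span (by simp)
  have m3 : e3 ∈ Submodule.span ℝ ({e1, e2, e3} : Set (Matrix (Fin 3) (Fin 3) ℝ)) :=
    Submodule.subset_span (by simp)
  refine ⟨?_, h1, h2, h3⟩
  intro η hη
  induction hη using Submodule.span_induction with
  | mem x hx =>
    rcases hx with h | h | h
    · subst h; rw [h1]
      exact add_mem (add_mem (Submodule.smul_mem _ _ m1) (Submodule.smul_mem _ _ m2))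
        (Submodule.smul_mem _ _ m3)
    · subst h; rw [h2]; exact sub_mem m2 (Submodule.smul_mem _ _ m3)
    · rw [Set.mem_singleton_iff] at h
      subst h; rw [h3]; exact add_mem (Submodule.smul_mem _ _ m2) m3
  | zero =>
    have : dcayInv (v1 • e1 + v2 • e2 + v3 • e3) 0 = 0 := by
      simp only [dcayInv, mul_zero, zero_mul]
    rw [this]; exact Submodule.zero_mem _
  | add x y hx hy ihx ihy =>
    have : dcayInv (v1 • e1 + v2 • e2 + v3 • e3) (x + y) =
        dcayInv (v1 • e1 + v2 • e2 + v3 • e3) x + dcayInv (v1 • e1 + v2 • e2 + v3 • e3) y := by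
      simp only [dcayInv, mul_add, add_mul]; abel
    rw [this]; exact add_mem ihx ihy
  | smul a x hx ihx =>
    have : dcayInv (v1 • e1 + v2 • e2 + v3 • e3) (a • x) =
        a • dcayInv (v1 • e1 + v2 • e2 + v3 • e3) x := by
      simp only [dcayInv, Matrix.mul_smul, Matrix.smul_mul]
    rw [this]; exact Submodule.smul_mem _ _ ihx
end
end

section
/- Let g_i = [[R_i, r_i],[0, 1]] and g_j = [[R_j, r_j],[0, 1]] be elements of SE(2) with r_i = (x_i, y_i), r_j = (x_j, y_j), and let σ > 0. Then (x_i - x_j)² + (y_i - y_j)² - 4 = ‖Ad_{g_i⁻¹ g_j} e₁‖² - 6, so the collision avoidance potential satisfies σ/(2((x_i - x_j)² + (y_i - y_j)² - 4)) = σ/(2(‖Ad_{g_i⁻¹ g_j} e₁‖² - 6)); moreover for a single g = [[R, (x, y)],[0, 1]] ∈ SE(2), x² + y² - 4 = ‖Ad_{g⁻¹} e₁‖² - 6, so the obstacle avoidance potential satisfies σ/(2(x² + y² - 4)) = σ/(2(‖Ad_{g⁻¹} e₁‖² - 6)). -/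
open Matrix

noncomputable section

lemma entries_of (Q : Matrix (Fin 2) (Fin 2) ℝ) (hQ : Qᵀ * Q = 1) :
    Q 0 0 ^ 2 + Q 1 0 ^ 2 = 1 ∧ Q 0 0 * Q 0 1 + Q 1 0 * Q 1 1 = 0 ∧
    Q 0 1 ^ 2 + Q 1 1 ^ 2 = 1 := by
  have h00 := congrFun (congrFun hQ 0) 0
  have h01 := congrFun (congrFun hQ 0) 1
  have h11 := congrFun (congrFun hQ 1) 1
  simp [Matrix.mul_apply, Fin.sum_univ_succ, Matrix.one_apply] at h00 h01 h11
  refine ⟨by nlinarith, by nlinarith, by nlinarith⟩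

lemma inv_SE2 (Q : Matrix (Fin 2) (Fin 2) ℝ) (t : Fin 2 → ℝ) (hQ : Qᵀ * Q = 1) :
    (SE2 Q t)⁻¹ = SE2 Qᵀ ![-(Q 0 0 * t 0 + Q 1 0 * t 1), -(Q 0 1 * t 0 + Q 1 1 * t 1)] := by
  obtain ⟨h00, h01, h11⟩ := entries_of Q hQ
  apply Matrix.inv_eq_left_inv
  ext i j
  fin_cases i <;> fin_cases j <;>
    simp [SE2, Matrix.mul_apply, Fin.sum_univ_succ, Matrix.one_apply] <;> nlinarith

lemma mul_SE2 (Q Q' : Matrix (Fin 2) (Fin 2) ℝ) (t t' : Fin 2 → ℝ) :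
    SE2 Q t * SE2 Q' t' = SE2 (Q * Q')
      ![Q 0 0 * t' 0 + Q 0 1 * t' 1 + t 0, Q 1 0 * t' 0 + Q 1 1 * t' 1 + t 1] := by
  ext i j
  fin_cases i <;> fin_cases j <;>
    simp [SE2, Matrix.mul_apply, Fin.sum_univ_succ] <;> ring

lemma conj_e1 (Q : Matrix (Fin 2) (Fin 2) ℝ) (t : Fin 2 → ℝ)
    (hQ : Qᵀ * Q = 1) (hd : Q.det = 1) :
    SE2 Q t * e1 * (SE2 Q t)⁻¹ = !![0, -1, t 1; 1, 0, -(t 0); 0, 0, 0] := by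
  obtain ⟨h00, h01, h11⟩ := entries_of Q hQ
  rw [Matrix.det_fin_two] at hd
  rw [inv_SE2 Q t hQ]
  ext i j
  fin_cases i <;> fin_cases j <;>
    simp [SE2, e1, Matrix.mul_apply, Fin.sum_univ_succ, Matrix.vecHead, Matrix.vecTail] <;>
    first
    | rfl
    | linear_combination t 1 * hd
    | linear_combination (-(t 0)) * hd
    | nlinarith

lemma normSq_explicit (a b : ℝ) :
    normSq !![0, -1, a; 1, 0, b; 0, 0, 0] = 2 + a ^ 2 + b ^ 2 := by
  simp [normSq, Matrix.trace, Matrix.mul_apply, Fin.sum_univ_succ]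
  ring

/-- With agent radius `r̄ = 1` and a unit-radius obstacle at the origin:
`(x_i-x_j)² + (y_i-y_j)² - 4 = ‖Ad_{g_i⁻¹g_j}e₁‖² - 6` (so the collision avoidance
potentials agree) and `x² + y² - 4 = ‖Ad_{g⁻¹}e₁‖² - 6` (so the obstacle avoidance
potentials agree). -/
theorem potentials_via_adjoint (Ri Rj R : Matrix (Fin 2) (Fin 2) ℝ)
    (xi yi xj yj x y : ℝ)
    (hRi : Riᵀ * Ri = 1) (hdeti : Ri.det = 1)
    (hRj : Rjᵀ * Rj = 1) (hdetj : Rj.det = 1)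
    (hR : Rᵀ * R = 1) (hdet : R.det = 1)
    (σ : ℝ) (hσ : 0 < σ) :
    (xi - xj) ^ 2 + (yi - yj) ^ 2 - 4 =
      normSq ((SE2 Ri ![xi, yi])⁻¹ * SE2 Rj ![xj, yj] * e1 *
        ((SE2 Ri ![xi, yi])⁻¹ * SE2 Rj ![xj, yj])⁻¹) - 6 ∧
    σ / (2 * ((xi - xj) ^ 2 + (yi - yj) ^ 2 - 4)) =
      σ / (2 * (normSq ((SE2 Ri ![xi, yi])⁻¹ * SE2 Rj ![xj, yj] * e1 *
        ((SE2 Ri ![xi, yi])⁻¹ * SE2 Rj ![xj, yj])⁻¹) - 6)) ∧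
    x ^ 2 + y ^ 2 - 4 =
      normSq ((SE2 R ![x, y])⁻¹ * e1 * SE2 R ![x, y]) - 6 ∧
    σ / (2 * (x ^ 2 + y ^ 2 - 4)) =
      σ / (2 * (normSq ((SE2 R ![x, y])⁻¹ * e1 * SE2 R ![x, y]) - 6)) := by
  -- pair case
  have hRiT : Ri * Riᵀ = 1 := mul_eq_one_comm.mp hRi
  have hRT : R * Rᵀ = 1 := mul_eq_one_comm.mp hR
  have hQpair : (Riᵀ * Rj)ᵀ * (Riᵀ * Rj) = 1 := by
    rw [Matrix.transpose_mul, Matrix.transpose_transpose, Matrix.mul_assoc,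
      ← Matrix.mul_assoc Ri, hRiT, Matrix.one_mul, hRj]
  have hdpair : (Riᵀ * Rj).det = 1 := by
    rw [Matrix.det_mul, Matrix.det_transpose, hdeti, hdetj, one_mul]
  obtain ⟨ri00, ri01, ri11⟩ := entries_of Riᵀ (by rw [Matrix.transpose_transpose]; exact hRiT)
  obtain ⟨r00, r01, r11⟩ := entries_of Rᵀ (by rw [Matrix.transpose_transpose]; exact hRT)
  simp only [Matrix.transpose_apply] at ri00 ri01 ri11 r00 r01 r11
  have h1 : (xi - xj) ^ 2 + (yi - yj) ^ 2 - 4 =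
      normSq ((SE2 Ri ![xi, yi])⁻¹ * SE2 Rj ![xj, yj] * e1 *
        ((SE2 Ri ![xi, yi])⁻¹ * SE2 Rj ![xj, yj])⁻¹) - 6 := by
    rw [inv_SE2 Ri ![xi, yi] hRi, mul_SE2, conj_e1 _ _ hQpair hdpair, normSq_explicit]
    simp [Matrix.transpose_apply]
    linear_combination (-((xi - xj) ^ 2)) * ri00 + (-((yi - yj) ^ 2)) * ri11 +
      (-(2 * (xi - xj) * (yi - yj))) * ri01
  -- obstacle case
  have hback : (SE2 Rᵀ ![-(R 0 0 * x + R 1 0 * y), -(R 0 1 * x + R 1 1 * y)])⁻¹ =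
      SE2 R ![x, y] := by
    rw [inv_SE2 Rᵀ _ (by rw [Matrix.transpose_transpose]; exact hRT)]
    ext i j
    fin_cases i <;> fin_cases j <;>
      simp [SE2, Matrix.transpose_apply, Matrix.vecHead, Matrix.vecTail] <;>
      first
      | rfl
      | linear_combination x * r00 + y * r01
      | linear_combination y * r11 + x * r01
  have h2 : x ^ 2 + y ^ 2 - 4 =
      normSq ((SE2 R ![x, y])⁻¹ * e1 * SE2 R ![x, y]) - 6 := by
    have hx : x ^ 2 + y ^ 2 - 4 = normSq
        (SE2 Rᵀ ![-(R 0 0 * x + R 1 0 * y), -(R 0 1 * x + R 1 1 * y)] * e1 *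
         (SE2 Rᵀ ![-(R 0 0 * x + R 1 0 * y), -(R 0 1 * x + R 1 1 * y)])⁻¹) - 6 := by
      rw [conj_e1 Rᵀ _ (by rw [Matrix.transpose_transpose]; exact hRT)
        (by rw [Matrix.det_transpose]; exact hdet), normSq_explicit]
      simp
      linear_combination (-(x ^ 2)) * r00 + (-(y ^ 2)) * r11 + (-(2 * x * y)) * r01
    rw [inv_SE2 R ![x, y] hR] at *
    simp only [Matrix.cons_val_zero, Matrix.cons_val_one, Matrix.head_cons] at *
    rw [hx, hback]
  exact ⟨h1, by rw [h1], h2, by rw [h2]⟩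
end
end
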